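/- Suppose real numbers ρ̂_{j,k} and ρ̃_{j,k} (for 1 ≤ j < k ≤ 4) satisfy |ρ̂_{j,k}| ≥ t/2 > 0 and |ρ̃_{j,k} − ρ̂_{j,k}| < δ where δ = t(1−α)/20 and α ∈ (1/2,1). If (ρ̃_{1,3} ρ̃_{2,4})/(ρ̃_{1,4} ρ̃_{2,3}) = 1, then (ρ̂_{1,3} ρ̂_{2,4})/(ρ̂_{1,4} ρ̂_{2,3}) > α. -/

import Mathlib

lemma ratio_lbs_pos (h u c d : ℝ) (hc : 0 < c) (hh : c ≤ h)
    (hd1 : u - h < d) (hd2 : h - u < d) (hd0 : 0 < d) (hdc : 2 * d < c) :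
    (c - 2*d)/(c - d) < h / u ∧ (c - d)/c < u / h := by
  have hu : 0 < u := by linarith
  have hcd : 0 < c - d := by linarith
  have hhpos : 0 < h := by linarith
  constructor
  · rw [div_lt_div_iff₀ hcd hu]
    nlinarith [mul_pos hd0 hd0]
  · rw [div_lt_div_iff₀ hc hhpos]
    nlinarith

lemma ratio_lbs (h u c d : ℝ) (hc : 0 < c) (hh : c ≤ |h|) (hd : |u - h| < d)
    (hd0 : 0 < d) (hdc : 2 * d < c) :
    (c - 2*d)/(c - d) < h / u ∧ (c - d)/c < u / h := by
  obtain ⟨hd1, hd2⟩ := abs_lt.mp hd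
  rcases le_or_gt 0 h with hs | hs
  · rw [abs_of_nonneg hs] at hh
    exact ratio_lbs_pos h u c d hc hh hd2 (by linarith) hd0 hdc
  · rw [abs_of_neg hs] at hh
    have := ratio_lbs_pos (-h) (-u) c d hc hh (by linarith) (by linarith) hd0 hdc
    rwa [neg_div_neg_eq, neg_div_neg_eq] at this

set_option maxHeartbeats 1600000 in
/-- if the empirical correlations `ρ̂` satisfy `|ρ̂| ≥ t/2 > 0`, and
the true noisy correlations `ρ̃` satisfy `|ρ̃ - ρ̂| < δ` with `δ = t(1-α)/20` and
`α ∈ (1/2, 1)`, and if `(ρ̃₁₃ρ̃₂₄)/(ρ̃₁₄ρ̃₂₃) = 1`, then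
`(ρ̂₁₃ρ̂₂₄)/(ρ̂₁₄ρ̂₂₃) > α`. -/
theorem empirical_ratio_above_threshold
    (h12 h13 h14 h23 h24 h34 t12 t13 t14 t23 t24 t34 t α δ : ℝ)
    (ht : 0 < t / 2) (hα1 : 1 / 2 < α) (hα2 : α < 1)
    (hδ : δ = t * (1 - α) / 20)
    (hb12 : t / 2 ≤ |h12|) (hb13 : t / 2 ≤ |h13|) (hb14 : t / 2 ≤ |h14|)
    (hb23 : t / 2 ≤ |h23|) (hb24 : t / 2 ≤ |h24|) (hb34 : t / 2 ≤ |h34|)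
    (hd12 : |t12 - h12| < δ) (hd13 : |t13 - h13| < δ) (hd14 : |t14 - h14| < δ)
    (hd23 : |t23 - h23| < δ) (hd24 : |t24 - h24| < δ) (hd34 : |t34 - h34| < δ)
    (hratio : (t13 * t24) / (t14 * t23) = 1) :
    (h13 * h24) / (h14 * h23) > α := by
  have htpos : 0 < t := by linarith
  have hδpos : 0 < δ := by rw [hδ]; nlinarith
  have hdc : 2 * δ < t / 2 := by rw [hδ]; nlinarith
  obtain ⟨a13, b13⟩ := ratio_lbs h13 t13 (t/2) δ ht hb13 hd13 hδpos hdc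
  obtain ⟨a24, b24⟩ := ratio_lbs h24 t24 (t/2) δ ht hb24 hd24 hδpos hdc
  obtain ⟨a14, b14⟩ := ratio_lbs h14 t14 (t/2) δ ht hb14 hd14 hδpos hdc
  obtain ⟨a23, b23⟩ := ratio_lbs h23 t23 (t/2) δ ht hb23 hd23 hδpos hdc
  have hq1pos : (0:ℝ) < (t/2 - 2*δ)/(t/2 - δ) := by apply div_pos <;> linarith
  have hq2pos : (0:ℝ) < (t/2 - δ)/(t/2) := by apply div_pos <;> linarith
  have hn : ∀ h u : ℝ, t/2 ≤ |h| → |u - h| < δ → h ≠ 0 ∧ u ≠ 0 := by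
    intro h u hb hd
    constructor
    · intro h0; rw [h0, abs_zero] at hb; linarith
    · intro h0; rw [h0, zero_sub, abs_neg] at hd; linarith
  obtain ⟨hn13, tn13⟩ := hn h13 t13 hb13 hd13
  obtain ⟨hn24, tn24⟩ := hn h24 t24 hb24 hd24
  obtain ⟨hn14, tn14⟩ := hn h14 t14 hb14 hd14
  obtain ⟨hn23, tn23⟩ := hn h23 t23 hb23 hd23
  have teq : t13 * t24 = t14 * t23 :=
    (div_eq_one_iff_eq (mul_ne_zero tn14 tn23)).mp hratio
  have prod_eq : (h13 * h24) / (h14 * h23)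
      = (h13/t13) * (h24/t24) * ((t14/h14) * (t23/h23)) := by
    field_simp
    linear_combination teq
  rw [prod_eq]
  have key : ((t/2 - 2*δ)/(t/2 - δ)) * ((t/2 - 2*δ)/(t/2 - δ)) * (((t/2 - δ)/(t/2)) * ((t/2 - δ)/(t/2)))
      < (h13/t13) * (h24/t24) * ((t14/h14) * (t23/h23)) := by
    apply mul_lt_mul'' (mul_lt_mul'' a13 a24 (le_of_lt hq1pos) (le_of_lt hq1pos))
      (mul_lt_mul'' b14 b23 (le_of_lt hq2pos) (le_of_lt hq2pos)) <;> positivity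
  have e0 : t/2 - δ ≠ 0 := ne_of_gt (by linarith)
  have e1 : ((t/2 - 2*δ)/(t/2 - δ)) * ((t/2 - δ)/(t/2)) = (t/2 - 2*δ)/(t/2) := by
    rw [div_mul_div_comm, mul_comm (t/2 - δ) (t/2), mul_div_mul_right _ _ e0]
  have e2 : (t/2 - 2*δ)/(t/2) = (4 + α)/5 := by
    rw [div_eq_div_iff (ne_of_gt ht) (by norm_num : (5:ℝ) ≠ 0)]
    linear_combination (-2:ℝ) * 5 * hδ
  have qq : ((t/2 - 2*δ)/(t/2 - δ)) * ((t/2 - 2*δ)/(t/2 - δ)) * (((t/2 - δ)/(t/2)) * ((t/2 - δ)/(t/2)))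
      = ((4 + α)/5)^2 := by
    rw [← e2, ← e1]; ring
  have hfinal : α < ((4 + α)/5)^2 := by
    rw [div_pow, lt_div_iff₀ (by norm_num : (0:ℝ) < (5:ℝ)^2)]
    nlinarith [mul_pos (by linarith : (0:ℝ) < 1 - α) (by linarith : (0:ℝ) < 16 - α)]
  rw [qq] at key
  linarith
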